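/- Let L : ℕ → ℝ satisfy L(0) = 0 and, for all n ≥ 1, L(n) = 1 + (1/H_n)·Σ_{k=1}^{n} (1/k)·L(k−1). Then for all n ≥ 1, L(n) = Σ_{k=1}^{n} 1/(k·H_k). -/

import Mathlib

open Finset

/-- The `n`-th harmonic number `H_n = ∑_{k=1}^n 1/k`, with `H 0 = 0`. -/
noncomputable def H (n : ℕ) : ℝ := ∑ k ∈ Finset.Icc 1 n, (1 : ℝ) / k

lemma H_pos {n : ℕ} (hn : 1 ≤ n) : 0 < H n := by
  apply Finset.sum_pos
  · intro i hi
    simp only [Finset.mem_Icc] at hi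
    have : 0 < i := hi.1
    positivity
  · exact ⟨1, Finset.mem_Icc.mpr ⟨le_refl 1, hn⟩⟩

lemma H_one : H 1 = 1 := by simp [H]

theorem stmt_12 (L : ℕ → ℝ) (hL0 : L 0 = 0)
    (hrec : ∀ n : ℕ, 1 ≤ n →
      L n = 1 + (1 / H n) * ∑ k ∈ Finset.Icc 1 n, (1 / (k : ℝ)) * L (k - 1)) :
    ∀ n : ℕ, 1 ≤ n → L n = ∑ k ∈ Finset.Icc 1 n, 1 / ((k : ℝ) * H k) := by
  intro n hn
  induction n, hn using Nat.le_induction with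
  | base =>
    have h := hrec 1 le_rfl
    simp [H_one, hL0] at h ⊢
    simpa using h
  | succ n hn ih =>
    have hHn := H_pos hn
    have hHn1 := H_pos (n := n + 1) (by omega)
    have hs : H (n + 1) = H n + 1 / ((n : ℝ) + 1) := by
      have := Finset.sum_Icc_succ_top (a := 1) (b := n) (by omega)
        (fun k => (1 : ℝ) / k)
      simpa [H] using this
    have hr1 := hrec n hn
    have hr2 := hrec (n + 1) (by omega)
    rw [Finset.sum_Icc_succ_top (by omega)] at hr2
    simp only [Nat.add_sub_cancel] at hr2
    have hsum : ∑ k ∈ Finset.Icc 1 n, (1 / (k : ℝ)) * L (k - 1)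
        = H n * (L n - 1) := by
      rw [hr1]; field_simp; ring
    rw [hsum] at hr2
    rw [Finset.sum_Icc_succ_top (by omega), ← ih, hr2, hs]
    push_cast
    have h1 : (n : ℝ) + 1 ≠ 0 := by positivity
    have h2 : H n + 1 / ((n : ℝ) + 1) ≠ 0 := by
      have : 0 < H n + 1 / ((n : ℝ) + 1) := by positivity
      linarith
    field_simp
    ring
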